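/- Let p be an odd prime, K = ZMod p, and a, c ∈ K with c ≠ 0. Define d : ℕ → K by d_{-1} = 0 and d_m = d_{m-1} - a - m·c for m ≥ 0. Let N = (-2a/c).val ∈ {0, …, p-1} be the canonical representative of -2a/c in ZMod p. Then the least m ∈ ℕ with d m = 0 equals min N (p-1); in particular if N ≤ p - 2 then the least zero is N. -/
import Mathlib


theorem stmt_3 (p : ℕ) [Fact p.Prime] (hodd : p ≠ 2) (a c : ZMod p) (hc : c ≠ 0)
    (d : ℕ → ZMod p)
    (hd0 : d 0 = -a)
    (hds : ∀ m : ℕ, d (m + 1) = d m - a - (m + 1) • c) :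
    IsLeast {m : ℕ | d m = 0} (min ((-2 * a / c).val) (p - 1)) := by
  have hp : p.Prime := Fact.out
  have hp1 : 1 < p := hp.one_lt
  have h2 : (2 : ZMod p) ≠ 0 := by
    intro h
    have h2' : ((2 : ℕ) : ZMod p) = 0 := by push_cast; exact h
    have hdvd : p ∣ 2 := (ZMod.natCast_eq_zero_iff 2 p).mp h2'
    exact hodd ((Nat.prime_dvd_prime_iff_eq hp Nat.prime_two).mp hdvd)
  have key : ∀ m : ℕ, 2 * d m = -((m : ZMod p) + 1) * (2 * a + m * c) := by
    intro m
    induction m with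
    | zero => simp [hd0]
    | succ n ih =>
      rw [hds n, nsmul_eq_mul]
      push_cast
      push_cast at ih
      linear_combination ih
  have hzero : ∀ m : ℕ, d m = 0 ↔ ((m : ZMod p) + 1 = 0 ∨ 2 * a + m * c = 0) := by
    intro m
    constructor
    · intro h
      have := key m
      rw [h, mul_zero] at this
      rcases mul_eq_zero.mp this.symm with h' | h'
      · exact Or.inl (by simpa using neg_eq_zero.mp h')
      · exact Or.inr h'
    · intro h
      have h2d : 2 * d m = 0 := by
        rw [key m]
        rcases h with h | h <;> rw [h] <;> ring
      rcases mul_eq_zero.mp h2d with h' | h'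
      · exact absurd h' h2
      · exact h'
  set N := (-2 * a / c).val with hN
  have hNlt : N < p := ZMod.val_lt _
  have hNle : N ≤ p - 1 := Nat.le_sub_one_of_lt hNlt
  have hmin : min N (p - 1) = N := min_eq_left hNle
  constructor
  · show d (min N (p - 1)) = 0
    rw [hmin, hzero]
    right
    have hcast : ((N : ℕ) : ZMod p) = -2 * a / c := by
      rw [hN, ZMod.natCast_val, ZMod.cast_id]
    rw [hcast, div_mul_cancel₀ _ hc]
    ring
  · intro m hm
    rw [Set.mem_setOf_eq, hzero] at hm
    rcases hm with h | h
    · have : ((m + 1 : ℕ) : ZMod p) = 0 := by push_cast; exact h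
      have hdvd : p ∣ m + 1 := (ZMod.natCast_eq_zero_iff _ p).mp this
      have : p ≤ m + 1 := Nat.le_of_dvd (Nat.succ_pos m) hdvd
      calc min N (p - 1) ≤ p - 1 := min_le_right _ _
        _ ≤ m := by omega
    · have hm' : (m : ZMod p) = -2 * a / c := by
        field_simp
        linear_combination h
      have : N = m % p := by rw [hN, ← hm', ZMod.val_natCast]
      calc min N (p - 1) ≤ N := min_le_left _ _
        _ = m % p := this
        _ ≤ m := Nat.mod_le m p
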